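/- Let Q be a probability measure on ℝ × (0,∞) with square-integrable first coordinate and integrable second coordinate, let Z be a real random variable with law P_Z satisfying E[Z] = 0 and Var[Z] > 0, and suppose v + z > 0 for (Q ⊗ P_Z)-almost all ((μ,v), z). Let Q' be the pushforward of Q ⊗ P_Z under ((μ, v), z) ↦ (μ, v + z), so Q' is a mean-preserving spread of Q. Then Var_{Q'}(μ) = Var_Q(μ) and ∫ v dQ' = ∫ v dQ; hence the variance-based epistemic uncertainty, aleatoric uncertainty, and total uncertainty of Q' for the Gaussian predictive family N(μ, v) are all equal to those of Q, so the variance-based measure violates the strict version of axiom A4. -/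

import Mathlib

open MeasureTheory ProbabilityTheory

lemma map_fst_prod_eq {α β : Type*} [MeasurableSpace α] [MeasurableSpace β]
    (μ : Measure α) [SFinite μ] (ν : Measure β) [IsProbabilityMeasure ν] :
    (μ.prod ν).map Prod.fst = μ := by
  rw [Measure.map_fst_prod]; simp

lemma map_snd_prod_eq {α β : Type*} [MeasurableSpace α] [MeasurableSpace β]
    (μ : Measure α) [IsProbabilityMeasure μ] (ν : Measure β) [SFinite ν] :
    (μ.prod ν).map Prod.snd = ν := by
  rw [Measure.map_snd_prod]; simp

/-- A mean-preserving spread of the variance parameter leaves all variance-based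
uncertainty measures unchanged: if `Q'` is the law of `(μ, v + Z)` with `(μ,v) ∼ Q`,
`Z ∼ P_Z` independent, `E[Z] = 0` and `Var[Z] > 0`, then the variance-based epistemic
uncertainty `Var(μ)`, aleatoric uncertainty `∫ v`, and total uncertainty of `Q'` equal
those of `Q`; hence the variance-based measure violates the strict version of A4. -/
theorem variance_measures_invariant_under_mean_preserving_spread
    (Q : Measure (ℝ × ℝ)) [IsProbabilityMeasure Q]
    (PZ : Measure ℝ) [IsProbabilityMeasure PZ]
    (hQpos : ∀ᵐ p ∂Q, 0 < p.2)
    (hμsq : Integrable (fun p : ℝ × ℝ => p.1 ^ 2) Q)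
    (hμ : Integrable (fun p : ℝ × ℝ => p.1) Q)
    (hv : Integrable (fun p : ℝ × ℝ => p.2) Q)
    (hZint : Integrable (fun z : ℝ => z) PZ)
    (hZmean : ∫ z, z ∂PZ = 0)
    (hZvar : 0 < variance id PZ)
    (hpos' : ∀ᵐ q ∂(Q.prod PZ), 0 < q.1.2 + q.2)
    (Q' : Measure (ℝ × ℝ))
    (hQ' : Q' = (Q.prod PZ).map (fun q : (ℝ × ℝ) × ℝ => (q.1.1, q.1.2 + q.2))) :
    (variance (fun p : ℝ × ℝ => p.1) Q' = variance (fun p : ℝ × ℝ => p.1) Q) ∧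
    (∫ p, p.2 ∂Q' = ∫ p, p.2 ∂Q) ∧
    (variance (fun p : ℝ × ℝ => p.1) Q' + ∫ p, p.2 ∂Q'
      = variance (fun p : ℝ × ℝ => p.1) Q + ∫ p, p.2 ∂Q) := by
  have hT : Measurable (fun q : (ℝ × ℝ) × ℝ => (q.1.1, q.1.2 + q.2)) :=
    (measurable_fst.fst).prodMk (measurable_fst.snd.add measurable_snd)
  haveI : IsProbabilityMeasure Q' := by
    rw [hQ']; exact Measure.isProbabilityMeasure_map hT.aemeasurable
  have hQfst : (Q.prod PZ).map Prod.fst = Q := map_fst_prod_eq Q PZ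
  have hQsnd : (Q.prod PZ).map Prod.snd = PZ := map_snd_prod_eq Q PZ
  -- integrability and integral transfer for measurable functions of the first coordinate
  have key_fst : ∀ f : ℝ × ℝ → ℝ, Measurable f → Integrable f Q →
      Integrable (fun q : (ℝ × ℝ) × ℝ => f q.1) (Q.prod PZ) ∧
      ∫ q, f q.1 ∂(Q.prod PZ) = ∫ p, f p ∂Q := by
    intro f hfm hf
    have h1 : Integrable (fun q : (ℝ × ℝ) × ℝ => f q.1) (Q.prod PZ) := by
      have := (integrable_map_measure (μ := Q.prod PZ) (f := Prod.fst) (g := f)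
        hfm.aestronglyMeasurable measurable_fst.aemeasurable).mp
      rw [hQfst] at this
      exact this hf
    refine ⟨h1, ?_⟩
    have h2 := integral_map (μ := Q.prod PZ) (φ := Prod.fst)
      measurable_fst.aemeasurable (f := f) hfm.aestronglyMeasurable
    rw [hQfst] at h2
    exact h2.symm
  -- integrability and integral transfer from Q.prod PZ to Q'
  have hmap1 : ∀ g : ℝ × ℝ → ℝ, Measurable g → Integrable g Q →
      (∀ q : (ℝ × ℝ) × ℝ, g (q.1.1, q.1.2 + q.2) = g q.1) →
      Integrable g Q' ∧ ∫ p, g p ∂Q' = ∫ p, g p ∂Q := by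
    intro g hgm hg hcomp
    have hcomp' : (fun q : (ℝ × ℝ) × ℝ => g (q.1.1, q.1.2 + q.2))
        = fun q : (ℝ × ℝ) × ℝ => g q.1 := funext hcomp
    have h1 : Integrable g Q' := by
      rw [hQ', integrable_map_measure hgm.aestronglyMeasurable hT.aemeasurable]
      show Integrable (fun q : (ℝ × ℝ) × ℝ => g (q.1.1, q.1.2 + q.2)) (Q.prod PZ)
      rw [hcomp']
      exact (key_fst g hgm hg).1
    refine ⟨h1, ?_⟩
    rw [hQ', integral_map hT.aemeasurable hgm.aestronglyMeasurable]
    show ∫ q, g (q.1.1, q.1.2 + q.2) ∂(Q.prod PZ) = _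
    rw [hcomp']
    exact (key_fst g hgm hg).2
  obtain ⟨hμ'int, hμ'eq⟩ := hmap1 (fun p => p.1) measurable_fst hμ (fun q => rfl)
  obtain ⟨hμsq'int, hμsq'eq⟩ :=
    hmap1 (fun p => p.1 ^ 2) (measurable_fst.pow_const 2) hμsq (fun q => rfl)
  -- variance equality via variance_def'
  have hmem : MemLp (fun p : ℝ × ℝ => p.1) 2 Q := by
    rw [memLp_two_iff_integrable_sq hμ.aestronglyMeasurable]
    simpa [sq] using hμsq
  have hmem' : MemLp (fun p : ℝ × ℝ => p.1) 2 Q' := by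
    rw [memLp_two_iff_integrable_sq hμ'int.aestronglyMeasurable]
    simpa [sq] using hμsq'int
  have hvar : variance (fun p : ℝ × ℝ => p.1) Q' = variance (fun p : ℝ × ℝ => p.1) Q := by
    rw [variance_eq_sub hmem', variance_eq_sub hmem]
    simp only [Pi.pow_apply] at *
    rw [hμsq'eq, hμ'eq]
  -- aleatoric part
  have hvQ' : ∫ p, p.2 ∂Q' = ∫ p, p.2 ∂Q := by
    have hv1 : Integrable (fun q : (ℝ × ℝ) × ℝ => q.1.2) (Q.prod PZ) :=
      (key_fst (fun p => p.2) measurable_snd hv).1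
    have hz1 : Integrable (fun q : (ℝ × ℝ) × ℝ => q.2) (Q.prod PZ) := by
      have := (integrable_map_measure (μ := Q.prod PZ) (f := Prod.snd) (g := fun z : ℝ => z)
        measurable_id.aestronglyMeasurable measurable_snd.aemeasurable).mp
      rw [hQsnd] at this
      exact this hZint
    have hzint : ∫ q : (ℝ × ℝ) × ℝ, q.2 ∂(Q.prod PZ) = 0 := by
      have h2 := integral_map (μ := Q.prod PZ) (φ := Prod.snd)
        measurable_snd.aemeasurable (f := fun z : ℝ => z)
        measurable_id.aestronglyMeasurable
      rw [hQsnd, hZmean] at h2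
      exact h2.symm
    rw [hQ', integral_map hT.aemeasurable measurable_snd.aestronglyMeasurable]
    show ∫ q, (q.1.2 + q.2) ∂(Q.prod PZ) = _
    rw [integral_add hv1 hz1, hzint, add_zero]
    exact (key_fst (fun p => p.2) measurable_snd hv).2
  exact ⟨hvar, hvQ', by rw [hvar, hvQ']⟩
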